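/- For every prime p, every integer α ≥ 1, and all integers n1, n2, one has Σ_{u mod p^α} R(u + n1, p^α) · R(u + n2, p^α) = p^α · R(n1 − n2, p^α), where the sum runs over all residues u modulo p^α. -/

import Mathlib

/-- `e(x/q)`-type additive character: for `x : ZMod q`, `eZMod q x = exp(2πi·x/q)`. -/
noncomputable def eZMod (q : ℕ) (x : ZMod q) : ℂ :=
  Complex.exp (2 * Real.pi * Complex.I * (x.val : ℂ) / (q : ℂ))

/-- Kloosterman sum `S(m, n; q) = Σ_{d mod q, gcd(d,q)=1} e((m·d + n·d⁻¹)/q)`. -/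
noncomputable def kloostermanS (q : ℕ) (m n : ZMod q) : ℂ :=
  ∑ d ∈ (Finset.range q).filter (fun d => Nat.gcd d q = 1),
    eZMod q (m * (d : ZMod q) + n * ((d : ZMod q)⁻¹))

/-- Gauss sum `G_χ(n) = Σ_{a mod q} χ(a) e(a·n/q)`. -/
noncomputable def gaussS (q : ℕ) (χ : DirichletCharacter ℂ q) (n : ZMod q) : ℂ :=
  ∑ a ∈ Finset.range q, χ (a : ZMod q) * eZMod q ((a : ZMod q) * n)

/-- Ramanujan sum `R(n, q) = Σ_{a mod q, gcd(a,q)=1} e(a·n/q)`. -/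
noncomputable def ramanujanS (q : ℕ) (n : ZMod q) : ℂ :=
  ∑ a ∈ (Finset.range q).filter (fun a => Nat.gcd a q = 1), eZMod q ((a : ZMod q) * n)

lemma eZMod_eq_pow (q : ℕ) (x : ZMod q) :
    eZMod q x = Complex.exp (2 * Real.pi * Complex.I / q) ^ x.val := by
  rw [eZMod, show 2 * Real.pi * Complex.I * (x.val : ℂ) / q
      = x.val * (2 * Real.pi * Complex.I / q) by ring, Complex.exp_nat_mul]

lemma zeta_pow_q (q : ℕ) [NeZero q] :
    Complex.exp (2 * Real.pi * Complex.I / q) ^ q = 1 := by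
  have hq : (q : ℂ) ≠ 0 := Nat.cast_ne_zero.mpr (NeZero.ne q)
  rw [← Complex.exp_nat_mul, mul_div_assoc', mul_comm, mul_div_assoc, div_self hq, mul_one,
    Complex.exp_two_pi_mul_I]

lemma zeta_pow_mod (q : ℕ) [NeZero q] (a : ℕ) :
    Complex.exp (2 * Real.pi * Complex.I / q) ^ (a % q)
      = Complex.exp (2 * Real.pi * Complex.I / q) ^ a := by
  conv_rhs => rw [← Nat.div_add_mod a q]
  rw [pow_add, pow_mul, zeta_pow_q, one_pow, one_mul]

lemma eZMod_add (q : ℕ) [NeZero q] (x y : ZMod q) :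
    eZMod q (x + y) = eZMod q x * eZMod q y := by
  rw [eZMod_eq_pow, eZMod_eq_pow, eZMod_eq_pow, ← pow_add, ZMod.val_add, zeta_pow_mod]

lemma sum_eZMod_mul (q : ℕ) [NeZero q] (c : ZMod q) :
    ∑ u ∈ Finset.range q, eZMod q (c * (u : ZMod q)) = if c = 0 then (q : ℂ) else 0 := by
  by_cases hc : c = 0
  · simp [hc, eZMod]
  · rw [if_neg hc]
    simp_rw [eZMod_eq_pow]
    set z : ℂ := Complex.exp (2 * Real.pi * Complex.I / q) with hzdef
    have hzq : z ^ q = 1 := zeta_pow_q q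
    have hval : ∀ u : ℕ, (c * (u : ZMod q)).val = c.val * u % q := by
      intro u
      rw [ZMod.val_mul, ZMod.val_natCast]
      conv_rhs => rw [Nat.mul_mod]
      conv_lhs => rw [Nat.mul_mod]
      simp [Nat.mod_mod_of_dvd]
    have hprim : IsPrimitiveRoot z q := Complex.isPrimitiveRoot_exp q (NeZero.ne q)
    have hz : z ^ c.val ≠ 1 :=
      hprim.pow_ne_one_of_pos_of_lt (show c.val ≠ 0 by
        simpa [ZMod.val_eq_zero] using hc) (ZMod.val_lt c)
    have hsum : ∀ u ∈ Finset.range q, z ^ (c * (u : ZMod q)).val = (z ^ c.val) ^ u := by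
      intro u _
      rw [hval, show z ^ (c.val * u % q) = z ^ (c.val * u) from zeta_pow_mod q _, pow_mul]
    rw [Finset.sum_congr rfl hsum, geom_sum_eq hz, ← pow_mul, mul_comm, pow_mul, hzq,
      one_pow, sub_self, zero_div]


/-- For a prime `p`, `α ≥ 1` and integers `n1, n2`:
`Σ_{u mod p^α} R(u + n1, p^α) R(u + n2, p^α) = p^α · R(n1 − n2, p^α)`. -/
theorem stmt13 (p : ℕ) (hp : p.Prime) (α : ℕ) (hα : 1 ≤ α) (n1 n2 : ℤ) :
    ∑ u ∈ Finset.range (p ^ α),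
        ramanujanS (p ^ α) (((u : ℕ) : ZMod (p ^ α)) + (n1 : ZMod (p ^ α))) *
          ramanujanS (p ^ α) (((u : ℕ) : ZMod (p ^ α)) + (n2 : ZMod (p ^ α))) =
      ((p : ℂ) ^ α) * ramanujanS (p ^ α) ((n1 - n2 : ℤ) : ZMod (p ^ α)) := by
  set q := p ^ α with hqdef
  have hq0 : 0 < q := pow_pos hp.pos α
  haveI : NeZero q := ⟨hq0.ne'⟩
  set A := (Finset.range q).filter (fun a => Nat.gcd a q = 1) with hA
  have key : ∀ a ∈ A, (∑ b ∈ A, ∑ u ∈ Finset.range q,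
      eZMod q ((a : ZMod q) * ((u : ZMod q) + (n1 : ZMod q))) *
        eZMod q ((b : ZMod q) * ((u : ZMod q) + (n2 : ZMod q))))
      = (q : ℂ) * eZMod q ((a : ZMod q) * (((n1 - n2 : ℤ)) : ZMod q)) := by
    intro a ha
    have haU : IsUnit ((a : ZMod q)) := by
      rw [hA, Finset.mem_filter] at ha
      exact (ZMod.isUnit_iff_coprime a q).mpr ha.2
    have inner : ∀ b ∈ A, (∑ u ∈ Finset.range q,
        eZMod q ((a : ZMod q) * ((u : ZMod q) + (n1 : ZMod q))) *
          eZMod q ((b : ZMod q) * ((u : ZMod q) + (n2 : ZMod q))))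
        = (if ((a : ZMod q) + (b : ZMod q)) = 0 then (q : ℂ) else 0) *
            eZMod q ((a : ZMod q) * (n1 : ZMod q) + (b : ZMod q) * (n2 : ZMod q)) := by
      intro b _
      have hterm : ∀ u ∈ Finset.range q,
          eZMod q ((a : ZMod q) * ((u : ZMod q) + (n1 : ZMod q))) *
            eZMod q ((b : ZMod q) * ((u : ZMod q) + (n2 : ZMod q)))
          = eZMod q (((a : ZMod q) + (b : ZMod q)) * (u : ZMod q)) *
              eZMod q ((a : ZMod q) * (n1 : ZMod q) + (b : ZMod q) * (n2 : ZMod q)) := by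
        intro u _
        rw [← eZMod_add, ← eZMod_add]
        congr 1
        ring
      rw [Finset.sum_congr rfl hterm, ← Finset.sum_mul, sum_eZMod_mul]
    rw [Finset.sum_congr rfl inner]
    set b0 : ℕ := (-(a : ZMod q)).val with hb0
    have hb0cast : ((b0 : ℕ) : ZMod q) = -(a : ZMod q) := by
      rw [hb0, ZMod.natCast_val, ZMod.cast_id]
    have hb0mem : b0 ∈ A := by
      rw [hA, Finset.mem_filter]
      refine ⟨Finset.mem_range.mpr (ZMod.val_lt _), ?_⟩
      have : IsUnit ((b0 : ℕ) : ZMod q) := by rw [hb0cast]; exact haU.neg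
      exact (ZMod.isUnit_iff_coprime b0 q).mp this
    rw [Finset.sum_eq_single_of_mem b0 hb0mem ?side]
    case side =>
      intro b hbmem hbne
      have hne : ((a : ZMod q) + (b : ZMod q)) ≠ 0 := by
        intro h
        apply hbne
        have hb : b < q := Finset.mem_range.mp (Finset.mem_filter.mp (hA ▸ hbmem)).1
        have hbc : (b : ZMod q) = -(a : ZMod q) := by linear_combination h
        calc b = ((b : ZMod q)).val := (ZMod.val_cast_of_lt hb).symm
          _ = b0 := by rw [hbc]
      rw [if_neg hne, zero_mul]
    · rw [hb0cast, add_neg_cancel, if_pos rfl]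
      congr 1
      push_cast
      ring
  calc ∑ u ∈ Finset.range q,
        ramanujanS q ((u : ZMod q) + (n1 : ZMod q)) * ramanujanS q ((u : ZMod q) + (n2 : ZMod q))
      = ∑ u ∈ Finset.range q, ∑ a ∈ A, ∑ b ∈ A,
          eZMod q ((a : ZMod q) * ((u : ZMod q) + (n1 : ZMod q))) *
            eZMod q ((b : ZMod q) * ((u : ZMod q) + (n2 : ZMod q))) := by
        refine Finset.sum_congr rfl fun u _ => ?_
        rw [ramanujanS, ramanujanS, Finset.sum_mul_sum]
    _ = ∑ a ∈ A, ∑ b ∈ A, ∑ u ∈ Finset.range q,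
          eZMod q ((a : ZMod q) * ((u : ZMod q) + (n1 : ZMod q))) *
            eZMod q ((b : ZMod q) * ((u : ZMod q) + (n2 : ZMod q))) := by
        rw [Finset.sum_comm]
        exact Finset.sum_congr rfl fun a _ => Finset.sum_comm
    _ = ∑ a ∈ A, (q : ℂ) * eZMod q ((a : ZMod q) * (((n1 - n2 : ℤ)) : ZMod q)) :=
        Finset.sum_congr rfl key
    _ = ((p : ℂ) ^ α) * ramanujanS q (((n1 - n2 : ℤ)) : ZMod q) := by
        rw [← Finset.mul_sum, ramanujanS, ← hA, hqdef]
        push_cast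
        ring
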